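/- Let n ≥ 1 be an integer, θ ∈ (0,1), c ≥ 1 an integer, and let 𝒮 = (S_1, …, S_ℓ) be a finite list of ℓ ≥ 1 nonempty subsets of {1,…,n}. For 1 ≤ i ≤ n define W_i(p,𝒮) = (1/ℓ)·Σ_{j : i∈S_j} θ c (1 − p(S_j))^{c−1} / (1 − θ(1 − p(S_j))^c)^2. Let p be a schedule with p_i > 0 for every i and Σ_{z=1}^n p_z W_z(p,𝒮) > 0. If p_i W_i(p,𝒮) / (Σ_{z=1}^n p_z W_z(p,𝒮)) = p_i for every i, then p minimizes the sample cost: cost_θ(p,𝒮) ≤ cost_θ(q,𝒮) for every schedule q. -/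

import Mathlib

private lemma geomL1 (c : ℕ) (a b : ℝ) (ha : 0 ≤ a) (hb : 0 ≤ b) :
    (c : ℝ) * a ^ (c - 1) * (b - a) ≤ b ^ c - a ^ c := by
  rw [← geom_sum₂_mul b a c]
  have hterm : ∀ i ∈ Finset.range c, a ^ i * a ^ (c - 1 - i) = a ^ (c - 1) := by
    intro i hi
    rw [← pow_add]
    congr 1
    have : i < c := Finset.mem_range.mp hi
    omega
  have hconst : ∑ i ∈ Finset.range c, a ^ i * a ^ (c - 1 - i) = (c : ℝ) * a ^ (c - 1) := by
    rw [Finset.sum_congr rfl hterm]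
    simp [Finset.sum_const, nsmul_eq_mul]
  rcases le_total a b with hab | hab
  · apply mul_le_mul_of_nonneg_right _ (by linarith)
    rw [← hconst]
    exact Finset.sum_le_sum fun i _ =>
      mul_le_mul_of_nonneg_right (pow_le_pow_left₀ ha hab i) (pow_nonneg ha _)
  · apply mul_le_mul_of_nonpos_right _ (by linarith)
    rw [← hconst]
    exact Finset.sum_le_sum fun i _ =>
      mul_le_mul_of_nonneg_right (pow_le_pow_left₀ hb hab i) (pow_nonneg ha _)

private lemma keyIneq (θ : ℝ) (hθ0 : 0 < θ) (hθ1 : θ < 1) (c : ℕ) (a b : ℝ)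
    (ha0 : 0 ≤ a) (ha1 : a ≤ 1) (hb0 : 0 ≤ b) (hb1 : b ≤ 1) :
    1 / (1 - θ * a ^ c) + θ * c * a ^ (c - 1) / (1 - θ * a ^ c) ^ 2 * (b - a)
      ≤ 1 / (1 - θ * b ^ c) := by
  have hac : a ^ c ≤ 1 := pow_le_one₀ ha0 ha1
  have hbc : b ^ c ≤ 1 := pow_le_one₀ hb0 hb1
  have hac0 : 0 ≤ a ^ c := pow_nonneg ha0 c
  have hbc0 : 0 ≤ b ^ c := pow_nonneg hb0 c
  have hA : 0 < 1 - θ * a ^ c := by nlinarith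
  have hB : 0 < 1 - θ * b ^ c := by nlinarith
  set D : ℝ := b ^ c - a ^ c with hD
  set E : ℝ := (c : ℝ) * a ^ (c - 1) * (b - a) with hE
  have hDE : E ≤ D := geomL1 c a b ha0 hb0
  have h2 : (1 - b ^ c) * E ≤ (1 - a ^ c) * D := by
    rcases le_total a b with hab | hab
    · have hE0 : 0 ≤ E :=
        mul_nonneg (mul_nonneg (Nat.cast_nonneg c) (pow_nonneg ha0 _)) (by linarith)
      have hle : a ^ c ≤ b ^ c := pow_le_pow_left₀ ha0 hab c
      exact mul_le_mul (by linarith) hDE hE0 (by linarith)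
    · have hle : b ^ c ≤ a ^ c := pow_le_pow_left₀ hb0 hab c
      have hD0 : D ≤ 0 := by simp [hD]; linarith
      have h := mul_le_mul (show 1 - a ^ c ≤ 1 - b ^ c by linarith)
        (show -D ≤ -E by linarith) (by linarith) (by linarith)
      linarith
  have hkey : 0 ≤ (1 - θ * a ^ c) * D - (1 - θ * b ^ c) * E := by nlinarith
  have hident : 1 / (1 - θ * b ^ c)
      - (1 / (1 - θ * a ^ c) + θ * c * a ^ (c - 1) / (1 - θ * a ^ c) ^ 2 * (b - a))
      = θ * ((1 - θ * a ^ c) * D - (1 - θ * b ^ c) * E)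
        / ((1 - θ * a ^ c) ^ 2 * (1 - θ * b ^ c)) := by
    rw [hD, hE]
    field_simp
    ring
  have hpos : 0 ≤ θ * ((1 - θ * a ^ c) * D - (1 - θ * b ^ c) * E)
      / ((1 - θ * a ^ c) ^ 2 * (1 - θ * b ^ c)) :=
    div_nonneg (mul_nonneg hθ0.le hkey) (by positivity)
  linarith

private lemma listSumSwap {α : Type*} {n : ℕ} (l : List α) (F : α → Fin n → ℝ) :
    (l.map (fun S => ∑ i, F S i)).sum = ∑ i, (l.map (fun S => F S i)).sum := by
  induction l with
  | nil => simp
  | cons S t ih => simp [ih, Finset.sum_add_distrib]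

private lemma listSumFilter {α : Type*} (l : List α) (P : α → Prop) [DecidablePred P]
    (g : α → ℝ) :
    (l.map (fun S => if P S then g S else 0)).sum = ((l.filter (fun S => P S)).map g).sum := by
  induction l with
  | nil => simp
  | cons S t ih =>
    by_cases h : P S <;> simp [List.filter_cons, h, ih]

private lemma listSumAdd {α : Type*} (l : List α) (f g : α → ℝ) :
    (l.map (fun x => f x + g x)).sum = (l.map f).sum + (l.map g).sum := by
  induction l with
  | nil => simp
  | cons x t ih => simp [ih]; ring


/-- For a sample `𝒮` of `ℓ ≥ 1` nonempty subsets of `{1,…,n}` and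
`W_i(p,𝒮) = (1/ℓ)·Σ_{j : i∈S_j} θc(1 − p(S_j))^{c−1}/(1 − θ(1 − p(S_j))^c)²`,
if `p` is a schedule with all entries positive, `Σ_z p_z W_z(p,𝒮) > 0`, and the
WIGGINS-APX update leaves `p` unchanged, then `p` minimizes the sample cost
`cost_θ(·,𝒮)` over the standard simplex. -/
theorem stmt17 (n : ℕ) (hn : 1 ≤ n) (θ : ℝ) (hθ : θ ∈ Set.Ioo (0 : ℝ) 1)
    (c : ℕ) (hc : 1 ≤ c) (𝒮 : List (Finset (Fin n)))
    (hlen : 1 ≤ 𝒮.length) (hne : ∀ S ∈ 𝒮, S.Nonempty)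
    (cost : (Fin n → ℝ) → ℝ)
    (hcost : ∀ p, cost p = (1 / (𝒮.length : ℝ)) *
        (𝒮.map (fun S => 1 / (1 - θ * (1 - ∑ i ∈ S, p i) ^ c))).sum)
    (W : (Fin n → ℝ) → Fin n → ℝ)
    (hW : ∀ p i, W p i = (1 / (𝒮.length : ℝ)) *
        ((𝒮.filter (fun S => i ∈ S)).map (fun S =>
          θ * c * (1 - ∑ j ∈ S, p j) ^ (c - 1)
            / (1 - θ * (1 - ∑ j ∈ S, p j) ^ c) ^ 2)).sum)
    (p : Fin n → ℝ) (hp : p ∈ stdSimplex ℝ (Fin n))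
    (hpos : ∀ i, 0 < p i) (hsum : 0 < ∑ z, p z * W p z)
    (hfix : ∀ i, p i * W p i / (∑ z, p z * W p z) = p i) :
    ∀ q ∈ stdSimplex ℝ (Fin n), cost p ≤ cost q := by
  intro q hq
  obtain ⟨hp0, hp1⟩ := hp
  obtain ⟨hq0, hq1⟩ := hq
  obtain ⟨hθ0, hθ1⟩ := hθ
  have hL : (0:ℝ) < (𝒮.length : ℝ) := by exact_mod_cast hlen
  set lam := ∑ z, p z * W p z with hlam
  have hWlam : ∀ i, W p i = lam := by
    intro i
    have h := hfix i
    rw [div_eq_iff hsum.ne'] at h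
    exact mul_left_cancel₀ (hpos i).ne' h
  have hpS0 : ∀ S : Finset (Fin n), (0:ℝ) ≤ ∑ i ∈ S, p i :=
    fun S => Finset.sum_nonneg fun i _ => hp0 i
  have hpS1 : ∀ S : Finset (Fin n), (∑ i ∈ S, p i) ≤ 1 := fun S => by
    rw [← hp1]
    exact Finset.sum_le_sum_of_subset_of_nonneg (Finset.subset_univ S) fun i _ _ => hp0 i
  have hqS0 : ∀ S : Finset (Fin n), (0:ℝ) ≤ ∑ i ∈ S, q i :=
    fun S => Finset.sum_nonneg fun i _ => hq0 i
  have hqS1 : ∀ S : Finset (Fin n), (∑ i ∈ S, q i) ≤ 1 := fun S => by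
    rw [← hq1]
    exact Finset.sum_le_sum_of_subset_of_nonneg (Finset.subset_univ S) fun i _ _ => hq0 i
  set g : Finset (Fin n) → ℝ := fun S =>
    θ * c * (1 - ∑ j ∈ S, p j) ^ (c - 1) / (1 - θ * (1 - ∑ j ∈ S, p j) ^ c) ^ 2 with hg
  -- pointwise tangent inequality
  have hpt : ∀ S : Finset (Fin n),
      1 / (1 - θ * (1 - ∑ i ∈ S, p i) ^ c)
        + g S * ((∑ i ∈ S, p i) - ∑ i ∈ S, q i)
      ≤ 1 / (1 - θ * (1 - ∑ i ∈ S, q i) ^ c) := by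
    intro S
    have hk := keyIneq θ hθ0 hθ1 c (1 - ∑ i ∈ S, p i) (1 - ∑ i ∈ S, q i)
      (by linarith [hpS1 S]) (by linarith [hpS0 S]) (by linarith [hqS1 S]) (by linarith [hqS0 S])
    have e : (1 - ∑ i ∈ S, q i) - (1 - ∑ i ∈ S, p i) = (∑ i ∈ S, p i) - ∑ i ∈ S, q i := by ring
    rw [e] at hk
    exact hk
  have hstep : (𝒮.map (fun S => 1 / (1 - θ * (1 - ∑ i ∈ S, p i) ^ c)
        + g S * ((∑ i ∈ S, p i) - ∑ i ∈ S, q i))).sum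
      ≤ (𝒮.map (fun S => 1 / (1 - θ * (1 - ∑ i ∈ S, q i) ^ c))).sum :=
    List.sum_le_sum fun S _ => hpt S
  rw [listSumAdd] at hstep
  -- the linear term vanishes
  have hzero : (𝒮.map (fun S => g S * ((∑ i ∈ S, p i) - ∑ i ∈ S, q i))).sum = 0 := by
    have e1 : ∀ S : Finset (Fin n), g S * ((∑ i ∈ S, p i) - ∑ i ∈ S, q i)
        = ∑ i, (if i ∈ S then g S * (p i - q i) else 0) := by
      intro S
      rw [Finset.sum_ite_mem, Finset.univ_inter, ← Finset.mul_sum, Finset.sum_sub_distrib]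
    calc (𝒮.map (fun S => g S * ((∑ i ∈ S, p i) - ∑ i ∈ S, q i))).sum
        = (𝒮.map (fun S => ∑ i, (if i ∈ S then g S * (p i - q i) else 0))).sum := by
          simp only [e1]
      _ = ∑ i, (𝒮.map (fun S => if i ∈ S then g S * (p i - q i) else 0)).sum :=
          listSumSwap 𝒮 _
      _ = ∑ i, (p i - q i) * ((𝒮.length : ℝ) * lam) := by
          refine Finset.sum_congr rfl fun i _ => ?_
          have e2 : ∀ S : Finset (Fin n), (if i ∈ S then g S * (p i - q i) else 0)
              = (p i - q i) * (if i ∈ S then g S else 0) := by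
            intro S
            by_cases h : i ∈ S <;> simp [h] <;> ring
          have hsum : ((𝒮.filter (fun S => i ∈ S)).map g).sum = (𝒮.length : ℝ) * W p i := by
            have := hW p i
            rw [this]
            field_simp
            rfl
          simp only [e2]
          rw [List.sum_map_mul_left, listSumFilter 𝒮 (fun S => i ∈ S) g, hsum, hWlam i]
      _ = (∑ i, (p i - q i)) * ((𝒮.length : ℝ) * lam) := by rw [Finset.sum_mul]
      _ = 0 := by
          rw [Finset.sum_sub_distrib, hp1, hq1]
          ring
  rw [hzero] at hstep
  rw [hcost p, hcost q]
  have h1L : (0:ℝ) ≤ 1 / (𝒮.length : ℝ) := by positivity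
  have := mul_le_mul_of_nonneg_left (by linarith : (𝒮.map (fun S => 1 / (1 - θ * (1 - ∑ i ∈ S, p i) ^ c))).sum ≤ (𝒮.map (fun S => 1 / (1 - θ * (1 - ∑ i ∈ S, q i) ^ c))).sum) h1L
  exact this
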